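/- In the local model above (σ(t) = t/(1+t^n)^{1/n}, p ∤ n, I = t^a k[[t]]), the classes of t^i in coker(L^{Z/p} → (L/I)^{Z/p}) vanish for all i with a − n ≤ i ≤ a − 1 and p | i. -/

import Mathlib

open Multiplicative LaurentSeries Finset
open Multiplicative LaurentSeries Finset

noncomputable abbrev ee (c : ℤ) : WithZero (Multiplicative ℤ) := ((Multiplicative.ofAdd (-c) : Multiplicative ℤ) : WithZero (Multiplicative ℤ))

lemma ee_mul (c d : ℤ) : ee c * ee d = ee (c + d) := by
  rw [← WithZero.coe_mul, ← ofAdd_add]; congr 1; ring_nf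

lemma ee_le {c d : ℤ} : ee c ≤ ee d ↔ d ≤ c := by
  rw [WithZero.coe_le_coe, Multiplicative.ofAdd_le, neg_le_neg_iff]

lemma ee_lt {c d : ℤ} : ee c < ee d ↔ d < c := by
  rw [WithZero.coe_lt_coe, Multiplicative.ofAdd_lt, neg_lt_neg_iff]

lemma ee_zero : ee 0 = 1 := by simp [ee]

lemma ee_ne_zero (c : ℤ) : ee c ≠ 0 := WithZero.coe_ne_zero

lemma ee_inv (c : ℤ) : (ee c)⁻¹ = ee (-c) := by
  rw [← WithZero.coe_inv, ← ofAdd_neg]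

lemma ee_zpow (c m : ℤ) : (ee c) ^ m = ee (m * c) := by
  rw [← WithZero.coe_zpow]
  congr 1
  rw [← Int.ofAdd_mul]; congr 1; ring

variable {K : Type} [Field K]

lemma val_coeff_zero {D : ℤ} {f : LaurentSeries K} :
    Valued.v f ≤ ee D ↔ ∀ j : ℤ, j < D → f.coeff j = 0 :=
  LaurentSeries.valuation_le_iff_coeff_lt_eq_zero K

lemma val_t_zpow (j : ℤ) :
    Valued.v ((HahnSeries.single (1:ℤ) (1:K) : LaurentSeries K) ^ j) = ee j := by
  rw [map_zpow₀, LaurentSeries.valuation_single_zpow]; exact (ee_zpow 1 j).trans (by rw [mul_one])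

lemma val_single_zero {c : K} (hc : c ≠ 0) :
    Valued.v (HahnSeries.single (0:ℤ) c : LaurentSeries K) = 1 := by
  have hle : ∀ d : K, Valued.v (HahnSeries.single (0:ℤ) d : LaurentSeries K) ≤ 1 := by
    intro d
    rw [← ee_zero]
    refine val_coeff_zero.mpr fun j hj => ?_
    rw [HahnSeries.coeff_single_of_ne (by omega : j ≠ 0)]
  have hmul : (HahnSeries.single (0:ℤ) c : LaurentSeries K) * HahnSeries.single (0:ℤ) c⁻¹ = 1 := by
    rw [HahnSeries.single_mul_single, add_zero, mul_inv_cancel₀ hc, ← HahnSeries.single_zero_one]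
  have h1 : Valued.v ((HahnSeries.single (0:ℤ) c : LaurentSeries K)) *
      Valued.v ((HahnSeries.single (0:ℤ) c⁻¹ : LaurentSeries K)) = 1 := by
    rw [← map_mul, hmul, map_one]
  refine le_antisymm (hle c) ?_
  calc (1 : WithZero (Multiplicative ℤ)) = _ * _ := h1.symm
    _ ≤ Valued.v ((HahnSeries.single (0:ℤ) c : LaurentSeries K)) * 1 :=
        mul_le_mul_right (hle c⁻¹) _
    _ = _ := mul_one _

lemma val_pow_sub_one {u : LaurentSeries K} {c : ℤ} (hu : Valued.v u = 1)
    (h : Valued.v (u - 1) ≤ ee c) : ∀ j : ℕ, Valued.v (u ^ j - 1) ≤ ee c := by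
  intro j
  induction j with
  | zero => simp only [pow_zero, sub_self, map_zero]; exact zero_le'
  | succ j ih =>
      have : u ^ (j + 1) - 1 = u * (u ^ j - 1) + (u - 1) := by ring
      rw [this]
      refine Valuation.map_add_le _ ?_ h
      rw [map_mul, hu, one_mul]; exact ih

lemma val_zpow_sub_one {u : LaurentSeries K} {c : ℤ} (hu : Valued.v u = 1)
    (h : Valued.v (u - 1) ≤ ee c) : ∀ m : ℤ, Valued.v (u ^ m - 1) ≤ ee c := by
  have hu0 : u ≠ 0 := by
    intro h0; rw [h0, map_zero] at hu; exact zero_ne_one hu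
  intro m
  rcases le_or_gt 0 m with hm | hm
  · obtain ⟨q, rfl⟩ := Int.eq_ofNat_of_zero_le hm
    rw [zpow_natCast]; exact val_pow_sub_one hu h q
  · obtain ⟨q, rfl⟩ : ∃ q : ℕ, m = -q := ⟨m.natAbs, by omega⟩
    have huq : u ^ (-(q:ℤ)) * u ^ (q:ℤ) = 1 := by
      rw [← zpow_add₀ hu0]; simp
    have key : u ^ (-(q:ℤ)) - 1 = -(u ^ (-(q:ℤ))) * (u ^ q - 1) := by
      calc u ^ (-(q:ℤ)) - 1 = -(u ^ (-(q:ℤ)) * u ^ (q:ℤ) - u ^ (-(q:ℤ))) := by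
            rw [huq]; ring
        _ = -(u ^ (-(q:ℤ))) * (u ^ q - 1) := by rw [← zpow_natCast u q]; ring
    rw [key, map_mul, Valuation.map_neg, map_zpow₀, hu, one_zpow, one_mul]
    exact val_pow_sub_one hu h q

theorem stmt_11 {k : Type} [Field k] (p n : ℕ) [Fact p.Prime] [CharP k p]
    (hn : ¬ p ∣ n) (hn0 : 0 < n)
    (t : LaurentSeries k) (ht : t = HahnSeries.single (1 : ℤ) (1 : k))
    (σ : LaurentSeries k ≃ₐ[k] LaurentSeries k) (hσp : σ ^ p = 1)
    (x : LaurentSeries k) (hx : σ x = x)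
    (hrel : x ^ (-(n : ℤ)) = t ^ (-((n * p : ℕ) : ℤ)) - t ^ (-(n : ℤ)))
    (hxt : ∀ j : ℤ, j < (p : ℤ) + 1 → (x - t ^ (p : ℤ)).coeff j = 0)
    (a : ℤ) :
    ∀ i : ℤ, a - n ≤ i → i ≤ a - 1 → (p : ℤ) ∣ i →
      ∃ f : LaurentSeries k, σ f = f ∧ ∀ j : ℤ, j < a → (f - t ^ i).coeff j = 0 := by
  rintro i hi1 hi2 ⟨m, him⟩
  have hp2 : 2 ≤ p := (Fact.out : p.Prime).two_le
  have ht0 : t ≠ 0 := by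
    rw [ht]; exact HahnSeries.single_ne_zero one_ne_zero
  have hvt : ∀ j : ℤ, Valued.v (t ^ j) = ee j := by
    intro j; rw [ht]; exact val_t_zpow j
  -- v x = ee p
  have hvxt : Valued.v (x - t ^ (p : ℤ)) ≤ ee ((p:ℤ) + 1) := val_coeff_zero.mpr hxt
  have hvx : Valued.v x = ee p := by
    have hxdec : x = t ^ (p:ℤ) + (x - t ^ (p:ℤ)) := by ring
    rw [hxdec, Valuation.map_add_eq_of_lt_left, hvt]
    rw [hvt]
    exact lt_of_le_of_lt hvxt (ee_lt.mpr (by linarith))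
  have hx0 : x ≠ 0 := by
    intro h0; rw [h0, map_zero] at hvx; exact (ee_ne_zero _) hvx.symm
  have htp0 : t ^ (p:ℤ) ≠ 0 := zpow_ne_zero _ ht0
  -- u
  set u : LaurentSeries k := x * (t ^ (p:ℤ))⁻¹ with hu_def
  have hu0 : u ≠ 0 := mul_ne_zero hx0 (inv_ne_zero htp0)
  have hvu : Valued.v u = 1 := by
    rw [hu_def, map_mul, hvx, map_inv₀, hvt, ee_inv, ee_mul, add_neg_cancel, ee_zero]
  have hxu : x = t ^ (p:ℤ) * u := by
    rw [hu_def]; field_simp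
  -- v (u - 1) ≤ ee 1
  have hvu1' : Valued.v (u - 1) ≤ ee 1 := by
    have : u - 1 = (x - t ^ (p:ℤ)) * (t ^ (p:ℤ))⁻¹ := by
      rw [hu_def]; field_simp
    rw [this, map_mul, map_inv₀, hvt, ee_inv]
    calc Valued.v (x - t ^ (p:ℤ)) * ee (-(p:ℤ))
        ≤ ee ((p:ℤ)+1) * ee (-(p:ℤ)) := mul_le_mul_left hvxt _
      _ = ee 1 := by rw [ee_mul]; ring_nf
  -- the relation : u ^ (-n) = 1 - w
  set w : LaurentSeries k := t ^ ((n : ℤ) * ((p:ℤ) - 1)) with hw_def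
  have hvw : Valued.v w = ee ((n:ℤ) * ((p:ℤ) - 1)) := hvt _
  have hnp1 : (1:ℤ) ≤ (n:ℤ) * ((p:ℤ) - 1) := by
    have : (1:ℤ) ≤ (n:ℤ) := by exact_mod_cast hn0
    nlinarith
  have hvw_lt : Valued.v w < Valued.v (1 : LaurentSeries k) := by
    rw [map_one, hvw, ← ee_zero]
    exact ee_lt.mpr (by linarith)
  have hun : u ^ (-(n:ℤ)) = 1 - w := by
    have h1 : u ^ (-(n:ℤ)) = x ^ (-(n:ℤ)) * t ^ ((n:ℤ) * p) := by
      rw [hu_def, mul_zpow, ← zpow_neg, ← zpow_mul]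
      ring_nf
    rw [h1, hrel, sub_mul, ← zpow_add₀ ht0, ← zpow_add₀ ht0, hw_def]
    push_cast
    ring_nf
    rw [zpow_zero]
  have hv1w : Valued.v ((1 : LaurentSeries k) - w) = 1 := by
    rw [Valuation.map_sub_eq_of_lt_left _ hvw_lt, map_one]
  have h1w0 : (1 : LaurentSeries k) - w ≠ 0 := by
    intro h0; rw [h0, map_zero] at hv1w; exact zero_ne_one hv1w
  have hunn : u ^ (n:ℤ) = ((1:LaurentSeries k) - w)⁻¹ := by
    rw [← neg_neg (n:ℤ), zpow_neg, hun]
  have hvn_sub : Valued.v (u ^ (n:ℤ) - 1) = ee ((n:ℤ) * ((p:ℤ) - 1)) := by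
    have hkey : u ^ (n:ℤ) - 1 = w * ((1:LaurentSeries k) - w)⁻¹ := by
      rw [hunn]
      field_simp
      ring
    rw [hkey, map_mul, map_inv₀, hv1w, inv_one, mul_one, hvw]
  -- the geometric sum
  set S : LaurentSeries k := ∑ j ∈ range n, u ^ j with hS_def
  have hgeom : S * (u - 1) = u ^ n - 1 := geom_sum_mul u n
  have hvS : Valued.v S = 1 := by
    have hsub : S - (n : LaurentSeries k) = ∑ j ∈ range n, (u ^ j - 1) := by
      rw [hS_def, Finset.sum_sub_distrib, Finset.sum_const, card_range, nsmul_eq_mul, mul_one]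
    have hvsub : Valued.v (S - (n : LaurentSeries k)) ≤ ee 1 := by
      rw [hsub]; exact Valuation.map_sum_le _ (fun j _ => val_pow_sub_one hvu hvu1' j)
    have hnk : ((n : k)) ≠ 0 := by
      simpa [CharP.cast_eq_zero_iff k p n] using hn
    have hvn : Valued.v ((n : LaurentSeries k)) = 1 := by
      have hcast : ((n : LaurentSeries k)) = HahnSeries.single (0:ℤ) ((n:k)) := by
        rw [← HahnSeries.C_apply, map_natCast (HahnSeries.C : k →+* HahnSeries ℤ k) n]
      rw [hcast]
      exact val_single_zero hnk
    have hdec : S = (n : LaurentSeries k) + (S - (n : LaurentSeries k)) := by ring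
    rw [hdec, Valuation.map_add_eq_of_lt_left, hvn]
    rw [hvn]
    exact lt_of_le_of_lt hvsub (by rw [← ee_zero]; exact ee_lt.mpr one_pos)
  have hvu1 : Valued.v (u - 1) = ee ((n:ℤ) * ((p:ℤ) - 1)) := by
    have hv := congrArg Valued.v hgeom
    rw [map_mul, hvS, one_mul, ← zpow_natCast u n] at hv
    rw [hv, hvn_sub]
  have hm : Valued.v (u ^ m - 1) ≤ ee ((n:ℤ) * ((p:ℤ) - 1)) :=
    val_zpow_sub_one hvu (le_of_eq hvu1) m
  refine ⟨x ^ m, ?_, ?_⟩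
  · rw [map_zpow₀, hx]
  · have hxm : x ^ m = t ^ i * u ^ m := by
      rw [him, zpow_mul, hxu, mul_zpow]
    apply val_coeff_zero.mp
    have hsub : x ^ m - t ^ i = t ^ i * (u ^ m - 1) := by
      rw [hxm]; ring
    rw [hsub, map_mul, hvt]
    have hn1 : (1:ℤ) ≤ (n:ℤ) := by exact_mod_cast hn0
    calc ee i * Valued.v (u ^ m - 1)
        ≤ ee i * ee ((n:ℤ) * ((p:ℤ) - 1)) := mul_le_mul_right hm _
      _ = ee (i + (n:ℤ) * ((p:ℤ) - 1)) := ee_mul _ _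
      _ ≤ ee a := ee_le.mpr (by nlinarith)
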